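/- The automorphism group of the Niemeier lattice N of type A_1^{24} is isomorphic to the semidirect product (Z/2)^{24} ⋊ M_{24}, where (Z/2)^{24} acts by sign changes f_n ↦ -f_n and M_{24} acts by permuting the roots f_1,...,f_{24}. -/

import Mathlib

def indic (s : Finset ℕ) : Fin 24 → ZMod 2 := fun i => if (i : ℕ) + 1 ∈ s then 1 else 0

def golayBasisSets : Fin 12 → Finset ℕ :=
  ![{1,2,16,18,5,12,22,3}, {7,4,19,10,12,15,8,16}, {23,3,9,19,13,18,8,11},
    {6,3,22,4,21,17,15,9}, {20,10,11,17,14,13,22,12}, {24,2,10,19,9,5,14,21},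
    {8,7,15,17,11,23,18,16}, {16,1,2,21,4,7,8,18}, {18,1,16,8,23,13,14,5},
    {8,7,15,9,19,23,4,22,13,18,1,16}, {18,23,13,22,3,1,11,10,2,16,7,8},
    {16,1,2,10,12,7,5,9,15,8,23,18}]

def golayCode : Submodule (ZMod 2) (Fin 24 → ZMod 2) :=
  Submodule.span (ZMod 2) (Set.range fun i => indic (golayBasisSets i))

/-! ### Nat bitmask machinery for the minimum-weight computation -/

def gMasks : List ℕ := [2263063, 314056, 4593028, 3227948, 2702848, 9708306,
  4441280, 1212619, 4370577, 6738377, 6461127, 4377555]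

def cwAux : ℕ → List ℕ → ℕ
  | _, [] => 0
  | m, g :: gs => (if m % 2 = 1 then g else 0) ^^^ cwAux (m / 2) gs

def cwL (m : ℕ) : ℕ := cwAux m gMasks

def pop : ℕ → ℕ → ℕ
  | 0, _ => 0
  | f + 1, n => n % 2 + pop f (n / 2)

def vecOf (n : ℕ) : Fin 24 → ZMod 2 := fun i => if n.testBit i.val then 1 else 0

set_option maxRecDepth 10000 in
set_option maxHeartbeats 2000000 in
lemma wt_okN : ∀ a b : Fin 64,
    pop 24 (cwL (a.val * 64 + b.val)) ≤ 4 → cwL (a.val * 64 + b.val) = 0 := by decide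

lemma pop_eq_sum (f n : ℕ) : pop f n = ∑ j ∈ Finset.range f, n / 2 ^ j % 2 := by
  induction f generalizing n with
  | zero => simp [pop]
  | succ f ih =>
      rw [Finset.sum_range_succ', pow_zero, Nat.div_one]
      simp only [pop, ih (n / 2)]
      rw [add_comm]
      congr 1
      refine Finset.sum_congr rfl fun j _ => ?_
      rw [Nat.div_div_eq_div_mul]
      have h2 : 2 * 2 ^ j = 2 ^ (j + 1) := by rw [pow_succ]; ring
      rw [h2]

lemma card_weight (n : ℕ) :
    (Finset.univ.filter fun i : Fin 24 => vecOf n i ≠ 0).card = pop 24 n := by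
  rw [Finset.card_filter, pop_eq_sum, ← Fin.sum_univ_eq_sum_range (fun j => n / 2 ^ j % 2)]
  apply Finset.sum_congr rfl
  intro i _
  simp only [vecOf, Nat.testBit_eq_decide_div_mod_eq]
  rcases Nat.mod_two_eq_zero_or_one (n / 2 ^ (i : ℕ)) with h | h <;>
    simp [h, (by decide : (1 : ZMod 2) ≠ 0)]

lemma wt_ok (m : ℕ) (hm : m < 4096)
    (h : (Finset.univ.filter fun i : Fin 24 => vecOf (cwL m) i ≠ 0).card ≤ 4) : cwL m = 0 := by
  have h2 := wt_okN ⟨m / 64, by omega⟩ ⟨m % 64, by omega⟩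
  simp only at h2
  rw [show m / 64 * 64 + m % 64 = m by omega] at h2
  exact h2 (by rw [← card_weight]; exact h)

lemma vecOf_zero : vecOf 0 = 0 := by
  funext i; simp [vecOf]

lemma vecOf_xor (a b : ℕ) : vecOf (a ^^^ b) = vecOf a + vecOf b := by
  funext i
  simp only [vecOf, Nat.testBit_xor, Pi.add_apply]
  cases h1 : a.testBit i.val <;> cases h2 : b.testBit i.val <;> simp <;> decide

lemma xor_div_two (a b : ℕ) : (a ^^^ b) / 2 = a / 2 ^^^ b / 2 := by
  apply Nat.eq_of_testBit_eq
  intro j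
  simp only [← Nat.testBit_add_one, Nat.testBit_xor]

lemma xor_mod_two (x y : ℕ) : (x ^^^ y) % 2 = 1 ↔ ((x % 2 = 1) ↔ ¬(y % 2 = 1)) := by
  have h := Nat.testBit_xor x y 0
  simp only [Nat.testBit_zero] at h
  rcases Nat.mod_two_eq_zero_or_one x with hx | hx <;>
    rcases Nat.mod_two_eq_zero_or_one y with hy | hy <;>
      rcases Nat.mod_two_eq_zero_or_one (x ^^^ y) with hxy | hxy <;>
        simp [hx, hy, hxy] at h ⊢

lemma cwAux_xor (L : List ℕ) (x y : ℕ) :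
    cwAux (x ^^^ y) L = cwAux x L ^^^ cwAux y L := by
  induction L generalizing x y with
  | nil => simp [cwAux]
  | cons g gs ih =>
      simp only [cwAux, xor_div_two, ih (x / 2) (y / 2)]
      have : (if (x ^^^ y) % 2 = 1 then g else 0) =
          (if x % 2 = 1 then g else 0) ^^^ (if y % 2 = 1 then g else 0) := by
        rcases Nat.mod_two_eq_zero_or_one x with hx | hx <;>
          rcases Nat.mod_two_eq_zero_or_one y with hy | hy <;>
            have hxy := xor_mod_two x y <;> simp [hx, hy] at hxy <;> simp [hx, hy, hxy]
      rw [this]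
      apply Nat.eq_of_testBit_eq
      intro j
      simp only [Nat.testBit_xor]
      cases (if x % 2 = 1 then g else 0).testBit j <;>
        cases (if y % 2 = 1 then g else 0).testBit j <;>
          cases (cwAux (x / 2) gs).testBit j <;>
            cases (cwAux (y / 2) gs).testBit j <;> simp

def GM : Submodule (ZMod 2) (Fin 24 → ZMod 2) where
  carrier := {c | ∃ m, m < 4096 ∧ c = vecOf (cwL m)}
  zero_mem' := ⟨0, by norm_num, by rw [show cwL 0 = 0 by decide, vecOf_zero]⟩
  add_mem' := by
    rintro a b ⟨x, hx, rfl⟩ ⟨y, hy, rfl⟩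
    refine ⟨x ^^^ y, ?_, ?_⟩
    · have : (4096 : ℕ) = 2 ^ 12 := by norm_num
      rw [this] at hx hy ⊢
      exact Nat.xor_lt_two_pow hx hy
    · rw [show cwL (x ^^^ y) = cwL x ^^^ cwL y from cwAux_xor gMasks x y, vecOf_xor]
  smul_mem' := by
    intro t a ha
    have ht : t = 0 ∨ t = 1 := by revert t; decide
    rcases ht with rfl | rfl
    · exact ⟨0, by norm_num, by rw [show cwL 0 = 0 by decide, vecOf_zero]; simp⟩
    · simpa using ha

lemma gen_eq : ∀ j : Fin 12, indic (golayBasisSets j) = vecOf (cwL (2 ^ j.val)) := by decide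

lemma golay_le_GM : golayCode ≤ GM := by
  rw [golayCode, Submodule.span_le]
  rintro _ ⟨j, rfl⟩
  refine ⟨2 ^ j.val, ?_, gen_eq j⟩
  have h1 : (2:ℕ) ^ j.val < 2 ^ 12 := Nat.pow_lt_pow_right (by norm_num) j.2
  have h2 : (2:ℕ) ^ 12 = 4096 := by norm_num
  omega

lemma golay_min_wt {c : Fin 24 → ZMod 2} (hc : c ∈ golayCode)
    (h4 : (Finset.univ.filter fun i => c i ≠ 0).card ≤ 4) : c = 0 := by
  obtain ⟨m, hm, rfl⟩ := golay_le_GM hc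
  rw [wt_ok m hm h4, vecOf_zero]

/-- The ambient 24-dimensional rational quadratic space. -/
abbrev V24 := Fin 24 → ℚ

/-- The bilinear form on `V24` for which the standard basis vectors have norm 2. -/
def B24 (u v : V24) : ℚ := 2 * ∑ i, u i * v i

/-- The generators `f_n` of the root sublattice `R` of type `A₁²⁴`. -/
def f24 (n : Fin 24) : V24 := fun i => if i = n then 1 else 0

/-- The Niemeier lattice `N` of type `A₁²⁴`:
`N = { v ∈ (1/2)R : (v mod R) ∈ 𝒢₂₄ }`. -/
def NSet : Set V24 :=
  { v | ∃ w : Fin 24 → ℤ, (∀ i, v i = (w i : ℚ) / 2) ∧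
      (fun i => ((w i : ZMod 2))) ∈ golayCode }


/-- The Mathieu group `M₂₄`, realised as the subgroup of permutations of the 24
coordinates preserving the extended binary Golay code. -/
def M24 : Subgroup (Equiv.Perm (Fin 24)) where
  carrier := { σ | ∀ v : Fin 24 → ZMod 2, v ∈ golayCode ↔ v ∘ σ ∈ golayCode }
  one_mem' := by intro v; simp
  mul_mem' := by
    intro a b ha hb v
    rw [show v ∘ ⇑(a * b) = (v ∘ ⇑a) ∘ ⇑b by ext x; simp [Equiv.Perm.mul_apply]]
    exact (ha v).trans (hb (v ∘ ⇑a))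
  inv_mem' := by
    intro a ha v
    have h := ha (v ∘ ⇑a⁻¹)
    have h2 : (v ∘ ⇑a⁻¹) ∘ ⇑a = v := by ext x; simp
    rw [h2] at h
    exact h.symm

/-! ### Sign-permutation linear equivalences -/

/-- `-1` if the bit is `1`, otherwise `1`. -/
def sgn2 (x : ZMod 2) : ℚ := if x = 1 then -1 else 1

lemma zmod2_cases : ∀ x : ZMod 2, x = 0 ∨ x = 1 := by decide

lemma sgn2_zero : sgn2 0 = 1 := by rw [sgn2, if_neg (by decide)]

lemma sgn2_one : sgn2 1 = -1 := by rw [sgn2, if_pos rfl]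

lemma sgn2_mul_self (x : ZMod 2) : sgn2 x * sgn2 x = 1 := by
  rcases zmod2_cases x with rfl | rfl
  · rw [sgn2_zero]; norm_num
  · rw [sgn2_one]; norm_num

lemma sgn2_add (x y : ZMod 2) : sgn2 (x + y) = sgn2 x * sgn2 y := by
  rcases zmod2_cases x with rfl | rfl <;> rcases zmod2_cases y with rfl | rfl <;>
    simp [sgn2_zero, sgn2_one, show (1 + 1 : ZMod 2) = 0 by decide]

lemma sgn2_ne_zero (x : ZMod 2) : sgn2 x ≠ 0 := by
  rcases zmod2_cases x with rfl | rfl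
  · rw [sgn2_zero]; norm_num
  · rw [sgn2_one]; norm_num

lemma sgn2_eq_one {x : ZMod 2} (h : sgn2 x = 1) : x = 0 := by
  rcases zmod2_cases x with rfl | rfl
  · rfl
  · rw [sgn2_one] at h; norm_num at h

/-- The signed permutation `v ↦ (i ↦ ±v (σ⁻¹ i))` as a linear equivalence. -/
def toLin (ε : Fin 24 → ZMod 2) (σ : Equiv.Perm (Fin 24)) : V24 ≃ₗ[ℚ] V24 where
  toFun v := fun i => sgn2 (ε i) * v (σ⁻¹ i)
  invFun v := fun j => sgn2 (ε (σ j)) * v (σ j)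
  left_inv v := by
    funext j
    simp only [(show ∀ x, σ⁻¹ (σ x) = x from σ.symm_apply_apply)]
    rw [← mul_assoc, sgn2_mul_self, one_mul]
  right_inv v := by
    funext i
    simp only [(show ∀ x, σ (σ⁻¹ x) = x from σ.apply_symm_apply)]
    rw [← mul_assoc, sgn2_mul_self, one_mul]
  map_add' u v := by funext i; simp only [Pi.add_apply]; ring
  map_smul' c v := by funext i; simp only [Pi.smul_apply, smul_eq_mul, RingHom.id_apply]; ring

lemma toLin_apply (ε : Fin 24 → ZMod 2) (σ : Equiv.Perm (Fin 24)) (v : V24) (i : Fin 24) :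
    toLin ε σ v i = sgn2 (ε i) * v (σ⁻¹ i) := rfl

lemma toLin_left_inverse (ε : Fin 24 → ZMod 2) (σ : Equiv.Perm (Fin 24)) (v : V24) :
    toLin (ε ∘ ⇑σ) σ⁻¹ (toLin ε σ v) = v := by
  funext j
  rw [toLin_apply, toLin_apply]
  simp only [inv_inv, Function.comp_apply, (show ∀ x, σ⁻¹ (σ x) = x from σ.symm_apply_apply)]
  rw [← mul_assoc, sgn2_mul_self, one_mul]

lemma golay_comp_inv_mem {σ : Equiv.Perm (Fin 24)} (hσ : σ ∈ M24)
    {c : Fin 24 → ZMod 2} (hc : c ∈ golayCode) : c ∘ ⇑σ⁻¹ ∈ golayCode := by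
  have h := hσ (c ∘ ⇑σ⁻¹)
  have h2 : (c ∘ ⇑σ⁻¹) ∘ ⇑σ = c := by funext x; simp
  rw [h2] at h
  exact h.mpr hc

lemma toLin_mem_NSet {ε : Fin 24 → ZMod 2} {σ : Equiv.Perm (Fin 24)} (hσ : σ ∈ M24)
    {v : V24} (hv : v ∈ NSet) : toLin ε σ v ∈ NSet := by
  obtain ⟨w, hw, hwG⟩ := hv
  refine ⟨fun i => (if ε i = 1 then -1 else 1) * w (σ⁻¹ i), fun i => ?_, ?_⟩
  · rw [toLin_apply, hw (σ⁻¹ i), sgn2]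
    simp only
    by_cases h : ε i = 1
    · rw [if_pos h, if_pos h]; push_cast; ring
    · rw [if_neg h, if_neg h]; push_cast; ring
  · have : (fun i => (((if ε i = 1 then -1 else 1) * w (σ⁻¹ i) : ℤ) : ZMod 2)) =
        (fun i => ((w i : ZMod 2))) ∘ ⇑σ⁻¹ := by
      funext i
      simp only [Function.comp_apply]
      by_cases h : ε i = 1
      · rw [if_pos h]; push_cast; rw [neg_one_mul, CharTwo.neg_eq]
      · rw [if_neg h]; push_cast; rw [one_mul]
    rw [this]
    exact golay_comp_inv_mem hσ hwG

lemma toLin_mem_NSet_iff {ε : Fin 24 → ZMod 2} {σ : Equiv.Perm (Fin 24)} (hσ : σ ∈ M24)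
    (v : V24) : v ∈ NSet ↔ toLin ε σ v ∈ NSet := by
  constructor
  · exact fun hv => toLin_mem_NSet hσ hv
  · intro hv
    have := toLin_mem_NSet (ε := ε ∘ ⇑σ) (M24.inv_mem hσ) hv
    rwa [toLin_left_inverse] at this

lemma toLin_B24 (ε : Fin 24 → ZMod 2) (σ : Equiv.Perm (Fin 24)) (u v : V24) :
    B24 (toLin ε σ u) (toLin ε σ v) = B24 u v := by
  unfold B24
  congr 1
  have h1 : ∀ i, toLin ε σ u i * toLin ε σ v i = u (σ⁻¹ i) * v (σ⁻¹ i) := by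
    intro i
    rw [toLin_apply, toLin_apply, mul_mul_mul_comm, sgn2_mul_self, one_mul]
  rw [Finset.sum_congr rfl fun i _ => h1 i]
  exact Equiv.sum_comp σ⁻¹ fun j => u j * v j

/-- The group of automorphisms of the Niemeier lattice `N`: linear automorphisms of the
ambient space preserving the lattice and the bilinear form. -/
def AutN : Subgroup (V24 ≃ₗ[ℚ] V24) where
  carrier := { g | (∀ v, v ∈ NSet ↔ g v ∈ NSet) ∧ ∀ u v, B24 (g u) (g v) = B24 u v }
  one_mem' := by constructor <;> intro v <;> simp
  mul_mem' := by
    rintro a b ⟨ha1, ha2⟩ ⟨hb1, hb2⟩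
    refine ⟨fun v => ?_, fun u v => ?_⟩
    · rw [hb1 v, ha1 (b v)]; rfl
    · show B24 (a (b u)) (a (b v)) = _
      rw [ha2, hb2]
  inv_mem' := by
    rintro a ⟨ha1, ha2⟩
    have hinv : ∀ v, a (a⁻¹ v) = v := fun v => a.apply_symm_apply v
    refine ⟨fun v => ?_, fun u v => ?_⟩
    · have := ha1 (a⁻¹ v)
      rw [hinv] at this
      exact this.symm
    · have := ha2 (a⁻¹ u) (a⁻¹ v)
      rw [hinv, hinv] at this
      exact this.symm

/-- The action of a permutation of the 24 coordinates on the group `(ℤ/2)²⁴`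
(written multiplicatively) of sign vectors. -/
def permMulAut (σ : Equiv.Perm (Fin 24)) : MulAut (Multiplicative (Fin 24 → ZMod 2)) where
  toFun e := Multiplicative.ofAdd (Multiplicative.toAdd e ∘ ⇑σ⁻¹)
  invFun e := Multiplicative.ofAdd (Multiplicative.toAdd e ∘ ⇑σ)
  left_inv e := by
    show Multiplicative.ofAdd ((Multiplicative.toAdd e ∘ ⇑σ⁻¹) ∘ ⇑σ) = e
    have : (Multiplicative.toAdd e ∘ ⇑σ⁻¹) ∘ ⇑σ = Multiplicative.toAdd e := by
      ext i; simp
    rw [this]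
    rfl
  right_inv e := by
    show Multiplicative.ofAdd ((Multiplicative.toAdd e ∘ ⇑σ) ∘ ⇑σ⁻¹) = e
    have : (Multiplicative.toAdd e ∘ ⇑σ) ∘ ⇑σ⁻¹ = Multiplicative.toAdd e := by
      ext i; simp
    rw [this]
    rfl
  map_mul' e f := rfl

/-- The homomorphism `M₂₄ →* Aut((ℤ/2)²⁴)` given by permutation of coordinates. -/
def φ24 : M24 →* MulAut (Multiplicative (Fin 24 → ZMod 2)) where
  toFun σ := permMulAut σ.1
  map_one' := by
    ext e
    rfl
  map_mul' σ τ := by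
    ext e
    rfl

/-! ### The homomorphism into `AutN` -/

lemma toLin_mem_AutN (ε : Fin 24 → ZMod 2) {σ : Equiv.Perm (Fin 24)} (hσ : σ ∈ M24) :
    toLin ε σ ∈ AutN :=
  ⟨fun v => toLin_mem_NSet_iff hσ v, fun u v => toLin_B24 ε σ u v⟩

def Ψ : (Multiplicative (Fin 24 → ZMod 2)) ⋊[φ24] M24 →* AutN where
  toFun p := ⟨toLin (Multiplicative.toAdd p.left) p.right.1, toLin_mem_AutN _ p.right.2⟩
  map_one' := by
    apply Subtype.ext
    apply LinearEquiv.ext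
    intro v
    funext i
    show sgn2 0 * v _ = v i
    rw [sgn2_zero, one_mul]
    rfl
  map_mul' p q := by
    apply Subtype.ext
    apply LinearEquiv.ext
    intro v
    funext i
    show toLin _ _ v i = toLin _ _ (toLin _ _ v) i
    rw [toLin_apply, toLin_apply, toLin_apply]
    show sgn2 ((Multiplicative.toAdd p.left + Multiplicative.toAdd q.left ∘ ⇑(p.right.1)⁻¹) i)
        * v ((p.right.1 * q.right.1)⁻¹ i) = _
    rw [show (Multiplicative.toAdd p.left + Multiplicative.toAdd q.left ∘ ⇑(p.right.1)⁻¹) i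
        = Multiplicative.toAdd p.left i
          + Multiplicative.toAdd q.left ((p.right.1)⁻¹ i) from rfl, sgn2_add]
    have : (p.right.1 * q.right.1)⁻¹ i = (q.right.1)⁻¹ ((p.right.1)⁻¹ i) := by
      rw [mul_inv_rev]; rfl
    rw [this]
    ring

/-! ### Roots of the lattice -/

lemma f24_mem_NSet (n : Fin 24) : f24 n ∈ NSet := by
  refine ⟨fun i => if i = n then 2 else 0, fun i => ?_, ?_⟩
  · by_cases h : i = n <;> simp [f24, h]
  · have : (fun i => (((if i = n then 2 else 0 : ℤ)) : ZMod 2)) = 0 := by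
      funext i
      show (((if i = n then 2 else 0 : ℤ)) : ZMod 2) = 0
      by_cases h : i = n
      · rw [if_pos h]; decide
      · rw [if_neg h]; simp
    rw [this]
    exact zero_mem _
lemma B24_f24 (n : Fin 24) : B24 (f24 n) (f24 n) = 2 := by
  unfold B24 f24
  rw [Finset.sum_congr rfl fun i _ => by
        show (if i = n then (1:ℚ) else 0) * (if i = n then 1 else 0) = if i = n then 1 else 0
        by_cases h : i = n <;> simp [h]]
  rw [Finset.sum_ite_eq' Finset.univ n (fun _ => (1:ℚ))]
  simp

lemma root_classify {v : V24} (hv : v ∈ NSet) (h2 : B24 v v = 2) :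
    ∃ n, v = f24 n ∨ v = -f24 n := by
  obtain ⟨w, hw, hwG⟩ := hv
  -- the norm equation
  have hq : ∑ i, ((w i : ℚ)) ^ 2 = 4 := by
    have e : ∀ i, v i * v i = (w i : ℚ) ^ 2 / 4 := by
      intro i; rw [hw i]; ring
    rw [B24, Finset.sum_congr rfl fun i _ => e i, ← Finset.sum_div] at h2
    linarith
  have hz : ∑ i, (w i) ^ 2 = (4 : ℤ) := by exact_mod_cast hq
  -- all coordinates are even
  have hc0 : (fun i => ((w i : ZMod 2))) = 0 := by
    apply golay_min_wt hwG
    have hle : ∀ i ∈ Finset.univ.filter (fun i => ((w i : ZMod 2)) ≠ 0), 1 ≤ (w i) ^ 2 := by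
      intro i hi
      rw [Finset.mem_filter] at hi
      have hne : w i ≠ 0 := by
        intro h0
        exact hi.2 (by rw [h0]; simp)
      rcases hne.lt_or_gt with h | h <;> nlinarith
    have hnn : ∀ i, (0 : ℤ) ≤ (w i) ^ 2 := fun i => sq_nonneg _
    have h1 : ((Finset.univ.filter (fun i => ((w i : ZMod 2)) ≠ 0)).card : ℤ) ≤ 4 := by
      calc ((Finset.univ.filter (fun i => ((w i : ZMod 2)) ≠ 0)).card : ℤ)
          = ∑ _i ∈ Finset.univ.filter (fun i => ((w i : ZMod 2)) ≠ 0), (1 : ℤ) := by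
            rw [Finset.sum_const]; ring
        _ ≤ ∑ i ∈ Finset.univ.filter (fun i => ((w i : ZMod 2)) ≠ 0), (w i) ^ 2 :=
            Finset.sum_le_sum hle
        _ ≤ ∑ i, (w i) ^ 2 :=
            Finset.sum_le_sum_of_subset_of_nonneg (Finset.filter_subset _ _)
              (fun i _ _ => hnn i)
        _ = 4 := hz
    exact_mod_cast h1
  have heven : ∀ i, 2 ∣ w i := by
    intro i
    have := congrFun hc0 i
    simpa using (ZMod.intCast_zmod_eq_zero_iff_dvd (w i) 2).mp this
  choose u hu using heven
  have hu' : ∀ i, w i = 2 * u i := hu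
  have hsum : ∑ i, (u i) ^ 2 = (1 : ℤ) := by
    have e : ∑ i, (w i) ^ 2 = ∑ i, 4 * (u i) ^ 2 :=
      Finset.sum_congr rfl fun i _ => by rw [hu' i]; ring
    rw [e, ← Finset.mul_sum] at hz
    linarith
  obtain ⟨n, hn⟩ : ∃ n, u n ≠ 0 := by
    by_contra hno
    push_neg at hno
    rw [Finset.sum_congr rfl (fun i _ => by rw [hno i]; ring : ∀ i ∈ Finset.univ, (u i) ^ 2 = 0)]
      at hsum
    simp at hsum
  have h1n : 1 ≤ u n ^ 2 := by rcases hn.lt_or_gt with h | h <;> nlinarith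
  have hsplit : u n ^ 2 + ∑ j ∈ Finset.univ.erase n, (u j) ^ 2 = ∑ i, (u i) ^ 2 :=
    Finset.add_sum_erase Finset.univ (fun i => (u i) ^ 2) (Finset.mem_univ n)
  have hz2 : ∑ j ∈ Finset.univ.erase n, (u j) ^ 2 = 0 := by
    have hnn2 : 0 ≤ ∑ j ∈ Finset.univ.erase n, (u j) ^ 2 :=
      Finset.sum_nonneg fun j _ => sq_nonneg (u j)
    have h2' : ∑ j ∈ Finset.univ.erase n, (u j) ^ 2 ≤ 0 := by
      rw [hsum] at hsplit; linarith
    linarith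
  have hrest : ∀ i, i ≠ n → u i = 0 := by
    intro i hi
    have h0 := (Finset.sum_eq_zero_iff_of_nonneg fun j _ => sq_nonneg (u j)).mp hz2 i
      (Finset.mem_erase.mpr ⟨hi, Finset.mem_univ i⟩)
    exact sq_eq_zero_iff.mp h0
  have hun : u n * u n = 1 := by
    have : u n ^ 2 = 1 := by rw [hsum] at hsplit; linarith
    nlinarith
  have hcase : u n = 1 ∨ u n = -1 := Int.isUnit_iff.mp (IsUnit.of_mul_eq_one _ hun)
  have hvi : ∀ i, v i = (u i : ℚ) := by
    intro i; rw [hw i, hu' i]; push_cast; ring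
  refine ⟨n, ?_⟩
  rcases hcase with h | h
  · left
    funext i
    rw [hvi i]
    show _ = f24 n i
    rw [f24]
    by_cases hi : i = n
    · subst hi; rw [if_pos rfl, h]; norm_num
    · rw [if_neg hi, hrest i hi]; norm_num
  · right
    funext i
    rw [hvi i]
    show _ = -(f24 n i)
    rw [f24]
    by_cases hi : i = n
    · subst hi; rw [if_pos rfl, h]; norm_num
    · rw [if_neg hi, hrest i hi]; norm_num
/-! ### Injectivity -/

lemma Ψ_injective : Function.Injective Ψ := by
  rw [injective_iff_map_eq_one]
  intro p hp
  have hval : toLin (Multiplicative.toAdd p.left) p.right.1 = (1 : V24 ≃ₗ[ℚ] V24) :=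
    congrArg Subtype.val hp
  have happ : ∀ (v : V24) (i : Fin 24),
      sgn2 (Multiplicative.toAdd p.left i) * v ((p.right.1)⁻¹ i) = v i := by
    intro v i
    exact congrFun (congrArg (fun e : V24 ≃ₗ[ℚ] V24 => (e v : V24)) hval) i
  have hfix : ∀ n, p.right.1 n = n ∧ Multiplicative.toAdd p.left n = 0 := by
    intro n
    have h1 := happ (f24 n) (p.right.1 n)
    rw [(show (p.right.1)⁻¹ (p.right.1 n) = n from Equiv.symm_apply_apply _ _)] at h1
    have hfn : f24 n n = 1 := by rw [f24]; exact if_pos rfl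
    rw [hfn, mul_one] at h1
    by_cases h : p.right.1 n = n
    · refine ⟨h, ?_⟩
      rw [h] at h1
      rw [hfn] at h1
      exact sgn2_eq_one h1
    · exfalso
      have : f24 n (p.right.1 n) = 0 := by rw [f24]; exact if_neg h
      rw [this] at h1
      exact sgn2_ne_zero _ h1
  have hr : p.right = 1 := Subtype.ext (Equiv.ext fun n => (hfix n).1)
  have hl : p.left = 1 := by
    have h0 : Multiplicative.toAdd p.left = 0 := funext fun n => (hfix n).2
    calc p.left = Multiplicative.ofAdd (Multiplicative.toAdd p.left) := rfl
      _ = Multiplicative.ofAdd 0 := by rw [h0]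
      _ = 1 := rfl
  exact SemidirectProduct.ext hl hr

/-! ### Surjectivity -/

lemma pi_repr (v : V24) : v = ∑ n, v n • f24 n := by
  funext i
  rw [Finset.sum_apply]
  have e : ∀ n, (v n • f24 n) i = if i = n then v n else 0 := by
    intro n
    rw [Pi.smul_apply, f24, smul_eq_mul]
    by_cases h : i = n <;> simp [h]
  rw [Finset.sum_congr rfl fun n _ => e n, Finset.sum_ite_eq Finset.univ i v]
  simp

lemma Ψ_surjective : Function.Surjective Ψ := by
  rintro ⟨g, hgN, hgB⟩
  -- every image of a generator is a signed generator
  have hroot : ∀ n, ∃ m, g (f24 n) = f24 m ∨ g (f24 n) = -f24 m := by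
    intro n
    apply root_classify ((hgN (f24 n)).mp (f24_mem_NSet n))
    rw [hgB]
    exact B24_f24 n
  choose π hπ using hroot
  have hπinj : Function.Injective π := by
    intro a b hab
    have ha := hπ a
    have hb := hπ b
    rw [hab] at ha
    have hfab : f24 a = f24 b ∨ f24 a = -f24 b := by
      rcases ha with h1 | h1 <;> rcases hb with h2 | h2
      · left; apply g.injective; rw [h1, h2]
      · right; apply g.injective; rw [map_neg, h1, h2, neg_neg]
      · right; apply g.injective; rw [map_neg, h1, h2]
      · left; apply g.injective; rw [h1, h2]
    by_contra hne
    have hba : ¬(a = b) := hne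
    rcases hfab with h | h
    · have := congrFun h a
      rw [f24, f24, if_pos rfl, if_neg (by exact fun hc => hba hc)] at this
      norm_num at this
    · have := congrFun h a
      rw [f24] at this
      rw [if_pos rfl] at this
      have h2 : (-f24 b) a = 0 := by
        rw [Pi.neg_apply, f24, if_neg (by exact fun hc => hba hc)]
        norm_num
      rw [h2] at this
      norm_num at this
  let σ : Equiv.Perm (Fin 24) := Equiv.ofBijective π (Finite.injective_iff_bijective.mp hπinj)
  have hσa : ∀ n, σ n = π n := fun n => rfl
  classical
  let ε : Fin 24 → ZMod 2 := fun i => if g (f24 (σ⁻¹ i)) = -f24 i then 1 else 0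
  -- g agrees with `toLin ε σ` on generators
  have hkey : ∀ n, g (f24 n) = toLin ε σ (f24 n) := by
    intro n
    funext i
    rw [toLin_apply]
    by_cases hin : i = σ n
    · subst hin
      rw [(show σ⁻¹ (σ n) = n from σ.symm_apply_apply n)]
      have hfn : f24 n n = 1 := by rw [f24]; exact if_pos rfl
      rw [hfn, mul_one]
      have hεval : ε (σ n) = if g (f24 n) = -f24 (σ n) then 1 else 0 := by
        show (if g (f24 (σ⁻¹ (σ n))) = -f24 (σ n) then (1 : ZMod 2) else 0) = _
        rw [(show σ⁻¹ (σ n) = n from σ.symm_apply_apply n)]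
      rcases hπ n with h | h
      · have hne : ¬(g (f24 n) = -f24 (σ n)) := by
          rw [h, ← hσa n]
          intro hc
          have := congrFun hc (σ n)
          rw [f24, if_pos rfl, Pi.neg_apply, f24, if_pos rfl] at this
          norm_num at this
        rw [hεval, if_neg hne, sgn2_zero, h, ← hσa n]
        simp [f24]
      · have heq : g (f24 n) = -f24 (σ n) := by rw [h, ← hσa n]
        rw [hεval, if_pos heq, sgn2_one, heq, Pi.neg_apply]
        simp [f24]
    · have h0 : f24 n (σ⁻¹ i) = 0 := by
        rw [f24]
        apply if_neg
        intro hc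
        apply hin
        rw [← hc]
        exact (show σ (σ⁻¹ i) = i from σ.apply_symm_apply i).symm
      rw [h0, mul_zero]
      rcases hπ n with h | h
      · rw [h, ← hσa n, f24]
        exact if_neg hin
      · rw [h, ← hσa n, Pi.neg_apply, f24, if_neg hin]
        norm_num
  -- g agrees with `toLin ε σ` everywhere
  have hg : ∀ v, g v = toLin ε σ v := by
    intro v
    conv_lhs => rw [pi_repr v]
    conv_rhs => rw [pi_repr v]
    rw [map_sum, map_sum]
    exact Finset.sum_congr rfl fun n _ => by rw [map_smul, map_smul, hkey n]
  -- the permutation preserves the Golay code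
  have hσM : σ ∈ M24 := by
    have H : ∀ c ∈ golayCode, c ∘ ⇑σ⁻¹ ∈ golayCode := by
      intro c hc
      set wc : Fin 24 → ℤ := fun i => if c i = 1 then 1 else 0 with hwc
      have hvN : (fun i => ((wc i : ℚ)) / 2) ∈ NSet := by
        refine ⟨wc, fun i => rfl, ?_⟩
        have : (fun i => ((wc i : ZMod 2))) = c := by
          funext i
          rcases zmod2_cases (c i) with h | h
          · rw [hwc]
            simp only
            rw [if_neg (by rw [h]; decide), h]
            norm_num
          · rw [hwc]
            simp only
            rw [if_pos h, h]
            norm_num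
        rw [this]
        exact hc
      have h2 := (hgN _).mp hvN
      rw [hg] at h2
      obtain ⟨w', hw', hw'G⟩ := h2
      have hcast : ∀ i, ((w' i : ZMod 2)) = c (σ⁻¹ i) := by
        intro i
        have e := hw' i
        rw [toLin_apply] at e
        -- e : sgn2 (ε i) * (wc (σ⁻¹ i) / 2) = w' i / 2
        rcases zmod2_cases (ε i) with hε | hε
        · rw [hε, sgn2_zero, one_mul] at e
          have : (w' i : ℚ) = (wc (σ⁻¹ i) : ℚ) := by linarith
          have hZ : w' i = wc (σ⁻¹ i) := by exact_mod_cast this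
          rw [hZ]
          rcases zmod2_cases (c (σ⁻¹ i)) with h | h
          · rw [hwc]; simp only; rw [if_neg (by rw [h]; decide), h]; norm_num
          · rw [hwc]; simp only; rw [if_pos h, h]; norm_num
        · rw [hε, sgn2_one] at e
          have : (w' i : ℚ) = -(wc (σ⁻¹ i) : ℚ) := by linarith
          have hZ : w' i = -wc (σ⁻¹ i) := by exact_mod_cast this
          rw [hZ]
          push_cast
          rw [CharTwo.neg_eq]
          rcases zmod2_cases (c (σ⁻¹ i)) with h | h
          · rw [hwc]; simp only; rw [if_neg (by rw [h]; decide), h]; norm_num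
          · rw [hwc]; simp only; rw [if_pos h, h]; norm_num
      have : (fun i => ((w' i : ZMod 2))) = c ∘ ⇑σ⁻¹ := funext hcast
      rw [← this]
      exact hw'G
    -- upgrade to an equality of submodules via finite dimension
    let L : (Fin 24 → ZMod 2) ≃ₗ[ZMod 2] (Fin 24 → ZMod 2) :=
      LinearEquiv.funCongrLeft (ZMod 2) (ZMod 2) (σ⁻¹ : Equiv.Perm (Fin 24))
    have hLapp : ∀ c : Fin 24 → ZMod 2, L c = c ∘ ⇑σ⁻¹ := fun c => rfl
    have hle : golayCode.map (L : (Fin 24 → ZMod 2) →ₗ[ZMod 2] (Fin 24 → ZMod 2)) ≤ golayCode := by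
      rintro _ ⟨c, hc, rfl⟩
      exact H c hc
    have heq : golayCode.map (L : (Fin 24 → ZMod 2) →ₗ[ZMod 2] (Fin 24 → ZMod 2)) = golayCode :=
      Submodule.eq_of_le_of_finrank_le hle (LinearEquiv.finrank_map_eq L golayCode).ge
    intro c
    constructor
    · intro hc
      rw [← heq] at hc
      obtain ⟨d, hd, hdc⟩ := hc
      have hdc' : d ∘ ⇑σ⁻¹ = c := hdc
      have : c ∘ ⇑σ = d := by
        funext x
        rw [← hdc']
        simp
      rw [this]
      exact hd
    · intro hc
      have hmem : (L : (Fin 24 → ZMod 2) →ₗ[ZMod 2] (Fin 24 → ZMod 2)) (c ∘ ⇑σ)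
          ∈ golayCode.map (L : (Fin 24 → ZMod 2) →ₗ[ZMod 2] (Fin 24 → ZMod 2)) :=
        Submodule.mem_map_of_mem hc
      rw [heq] at hmem
      have he : (L : (Fin 24 → ZMod 2) →ₗ[ZMod 2] (Fin 24 → ZMod 2)) (c ∘ ⇑σ) = c := by
        funext x
        show (c ∘ ⇑σ) (σ⁻¹ x) = c x
        simp
      rwa [he] at hmem
  refine ⟨⟨Multiplicative.ofAdd ε, ⟨σ, hσM⟩⟩, ?_⟩
  apply Subtype.ext
  apply LinearEquiv.ext
  intro v
  exact (hg v).symm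

/-- The automorphism group of the Niemeier lattice `N` of type `A₁²⁴` is isomorphic to
the semidirect product `(ℤ/2)²⁴ ⋊ M₂₄`, where `(ℤ/2)²⁴` acts by the sign changes
`f_n ↦ -f_n` and `M₂₄` acts by permuting the roots `f_1, …, f_24`. -/
theorem autN_iso_semidirect :
    ∃ Φ : (Multiplicative (Fin 24 → ZMod 2)) ⋊[φ24] M24 ≃* AutN,
      (∀ ε : Multiplicative (Fin 24 → ZMod 2), ∀ v : V24, ∀ i : Fin 24,
        ((Φ (SemidirectProduct.inl ε) : V24 ≃ₗ[ℚ] V24) v) i =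
          (if Multiplicative.toAdd ε i = 1 then -1 else 1) * v i) ∧
      (∀ σ : M24, ∀ v : V24, ∀ i : Fin 24,
        ((Φ (SemidirectProduct.inr σ) : V24 ≃ₗ[ℚ] V24) v) i = v ((σ : Equiv.Perm (Fin 24))⁻¹ i)) := by
  refine ⟨MulEquiv.ofBijective Ψ ⟨Ψ_injective, Ψ_surjective⟩, ?_, ?_⟩
  · intro ε v i
    rfl
  · intro σ v i
    show sgn2 (Multiplicative.toAdd (1 : Multiplicative (Fin 24 → ZMod 2)) i) * v ((σ.1)⁻¹ i)
        = v ((σ : Equiv.Perm (Fin 24))⁻¹ i)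
    rw [show Multiplicative.toAdd (1 : Multiplicative (Fin 24 → ZMod 2)) i = 0 from rfl,
      sgn2_zero, one_mul]
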